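/- For all t > 0 and r > 0, the function ζ(t,r) = r·asinh(r/t) − √(t² + r²) + t satisfies ζ(t, r) ≥ r²/(2t) − r⁴/(6t³); in particular for t ≥ r one has ζ(t,r) ≥ r²/(2t) − r²/(6t) = r²/(3t). -/

import Mathlib

lemma aux_deriv_nonneg (x : ℝ) : 0 ≤ (Real.sqrt (1 + x ^ 2))⁻¹ - 1 + x ^ 2 / 2 := by
  have hs : 0 < Real.sqrt (1 + x ^ 2) := Real.sqrt_pos.2 (by positivity)
  have hs2 : Real.sqrt (1 + x ^ 2) ^ 2 = 1 + x ^ 2 := Real.sq_sqrt (by positivity)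
  have h : (1 - x ^ 2 / 2) * Real.sqrt (1 + x ^ 2) ≤ 1 := by
    nlinarith [sq_nonneg (Real.sqrt (1 + x ^ 2) - 1), sq_nonneg x,
      sq_nonneg (x ^ 2 * (Real.sqrt (1 + x ^ 2) - 1)), sq_nonneg (x * Real.sqrt (1 + x ^ 2))]
  have : 1 - x ^ 2 / 2 ≤ (Real.sqrt (1 + x ^ 2))⁻¹ := by
    rw [← one_div, le_div_iff₀ hs]; exact h
  linarith

lemma arsinh_lower (x : ℝ) (hx : 0 ≤ x) : x - x ^ 3 / 6 ≤ Real.arsinh x := by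
  set g : ℝ → ℝ := fun y => Real.arsinh y - y + y ^ 3 / 6 with hg
  have hderiv : ∀ y : ℝ, HasDerivAt g ((Real.sqrt (1 + y ^ 2))⁻¹ - 1 + y ^ 2 / 2) y := by
    intro y
    have h1 := Real.hasDerivAt_arsinh y
    have h2 : HasDerivAt (fun y : ℝ => y) 1 y := hasDerivAt_id y
    have h3 : HasDerivAt (fun y : ℝ => y ^ 3 / 6) (3 * y ^ 2 / 6) y := by
      simpa using ((hasDerivAt_pow 3 y).div_const 6)
    have := (h1.sub h2).add h3
    exact this.congr_deriv (by ring)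
  have hmono : MonotoneOn g (Set.Ici 0) := by
    apply monotoneOn_of_deriv_nonneg (convex_Ici 0)
    · exact (((Real.continuous_arsinh.sub continuous_id).add ((continuous_pow 3).div_const 6))).continuousOn
    · intro y _
      exact (hderiv y).differentiableAt.differentiableWithinAt
    · intro y _
      rw [(hderiv y).deriv]
      exact aux_deriv_nonneg y
  have h0 : g 0 = 0 := by simp [hg]
  have := hmono (Set.self_mem_Ici) hx hx
  rw [h0] at this
  simp only [hg] at this
  linarith

theorem zeta_one_lower_bound (t r : ℝ) (ht : 0 < t) (hr : 0 < r) :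
    r ^ 2 / (2 * t) - r ^ 4 / (6 * t ^ 3)
        ≤ r * Real.arsinh (r / t) - Real.sqrt (t ^ 2 + r ^ 2) + t ∧
      (r ≤ t → r ^ 2 / (3 * t)
        ≤ r * Real.arsinh (r / t) - Real.sqrt (t ^ 2 + r ^ 2) + t) := by
  have hx : (0:ℝ) ≤ r / t := by positivity
  have h1 : r / t - (r / t) ^ 3 / 6 ≤ Real.arsinh (r / t) := arsinh_lower _ hx
  have hsqrt : Real.sqrt (t ^ 2 + r ^ 2) ≤ t + r ^ 2 / (2 * t) := by
    have h : t ^ 2 + r ^ 2 ≤ (t + r ^ 2 / (2 * t)) ^ 2 := by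
      have hexp : (t + r ^ 2 / (2 * t)) ^ 2 = t ^ 2 + r ^ 2 + (r ^ 2 / (2 * t)) ^ 2 := by
        field_simp; ring
      rw [hexp]; nlinarith [sq_nonneg (r ^ 2 / (2 * t))]
    have := Real.sqrt_le_sqrt h
    rwa [Real.sqrt_sq (by positivity)] at this
  have hmain : r ^ 2 / (2 * t) - r ^ 4 / (6 * t ^ 3)
      ≤ r * Real.arsinh (r / t) - Real.sqrt (t ^ 2 + r ^ 2) + t := by
    have h2 : r * (r / t - (r / t) ^ 3 / 6) ≤ r * Real.arsinh (r / t) :=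
      mul_le_mul_of_nonneg_left h1 hr.le
    have heq : r * (r / t - (r / t) ^ 3 / 6) = r ^ 2 / t - r ^ 4 / (6 * t ^ 3) := by
      field_simp
    rw [heq] at h2
    have : r ^ 2 / t - r ^ 2 / (2 * t) = r ^ 2 / (2 * t) := by field_simp; ring
    linarith
  refine ⟨hmain, fun hrt => ?_⟩
  have h4 : r ^ 4 / (6 * t ^ 3) ≤ r ^ 2 / (6 * t) := by
    rw [div_le_div_iff₀ (by positivity) (by positivity)]
    have hr2 : r ^ 2 ≤ t ^ 2 := by nlinarith
    have := mul_le_mul_of_nonneg_left hr2 (show (0:ℝ) ≤ 6 * t * r ^ 2 by positivity)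
    nlinarith
  have h5 : r ^ 2 / (2 * t) - r ^ 2 / (6 * t) = r ^ 2 / (3 * t) := by
    field_simp; ring
  linarith
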